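/- Let q ∈ (0,1), γ = (1, q, q²)ᵀ, and G^(b) = [[1−q², 0, 1], [0, 1, 0], [q², 0, 0]]. Suppose Ξ is a finite index set, p : Ξ → ℝ satisfies p ξ > 0 for all ξ and Σ_ξ p ξ = 1, and for each ξ ∈ Ξ, G_ξ is a Gibbs-stochastic 3×3 real matrix. If G^(b) = Σ_{ξ∈Ξ} (p ξ)·G_ξ, then G_ξ = G^(b) for every ξ ∈ Ξ. -/

import Mathlib

open Matrix

/-- A 3×3 real matrix is Gibbs-stochastic (w.r.t. the Gibbs vector
`γ = (1, q, q²)`) if its entries lie in `[0,1]`, its columns sum to 1,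
and it fixes `γ`. -/
def IsGibbsStochastic (q : ℝ) (G : Matrix (Fin 3) (Fin 3) ℝ) : Prop :=
  (∀ i j, G i j ∈ Set.Icc (0 : ℝ) 1) ∧ (∀ j, ∑ i, G i j = 1) ∧
    G.mulVec ![1, q, q ^ 2] = ![1, q, q ^ 2]

/-- The transition matrix `G⁽ᵇ⁾` is an extreme point of the set of
Gibbs-stochastic matrices: any convex decomposition of it into
Gibbs-stochastic matrices is trivial. -/
theorem transition_matrix_point_b_extreme
    (q : ℝ) (hq : q ∈ Set.Ioo (0 : ℝ) 1)
    (Ξ : Type*) [Fintype Ξ]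
    (p : Ξ → ℝ) (hp : ∀ ξ, 0 < p ξ) (hpsum : ∑ ξ, p ξ = 1)
    (Gξ : Ξ → Matrix (Fin 3) (Fin 3) ℝ)
    (hGξ : ∀ ξ, IsGibbsStochastic q (Gξ ξ))
    (hdecomp : !![1 - q ^ 2, 0, 1; 0, 1, 0; q ^ 2, 0, 0] = ∑ ξ, p ξ • Gξ ξ) :
    ∀ ξ, Gξ ξ = !![1 - q ^ 2, 0, 1; 0, 1, 0; q ^ 2, 0, 0] := by
  intro ξ₀
  -- entrywise sums
  have hsum : ∀ i j, (∑ ξ, p ξ * Gξ ξ i j) =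
      !![1 - q ^ 2, 0, 1; 0, 1, 0; q ^ 2, 0, 0] i j := by
    intro i j
    have := congrFun (congrFun hdecomp i) j
    simpa [Matrix.sum_apply] using this.symm
  -- zero entries force each summand to be zero
  have hzero : ∀ i j, !![1 - q ^ 2, 0, 1; 0, 1, 0; q ^ 2, 0, 0] i j = 0 →
      Gξ ξ₀ i j = 0 := by
    intro i j h0
    have hs : (∑ ξ, p ξ * Gξ ξ i j) = 0 := by rw [hsum i j, h0]
    have hnn : ∀ ξ ∈ Finset.univ, 0 ≤ p ξ * Gξ ξ i j := fun ξ _ =>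
      mul_nonneg (hp ξ).le ((hGξ ξ).1 i j).1
    have := (Finset.sum_eq_zero_iff_of_nonneg hnn).mp hs ξ₀ (Finset.mem_univ _)
    have := mul_eq_zero.mp this
    rcases this with h | h
    · exact absurd h (hp ξ₀).ne'
    · exact h
  -- one entries force each summand to be one
  have hone : ∀ i j, !![1 - q ^ 2, 0, 1; 0, 1, 0; q ^ 2, 0, 0] i j = 1 →
      Gξ ξ₀ i j = 1 := by
    intro i j h1
    have hs : (∑ ξ, p ξ * (1 - Gξ ξ i j)) = 0 := by
      have : (∑ ξ, p ξ * (1 - Gξ ξ i j)) =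
          (∑ ξ, p ξ) - ∑ ξ, p ξ * Gξ ξ i j := by
        rw [← Finset.sum_sub_distrib]
        congr 1; ext ξ; ring
      rw [this, hpsum, hsum i j, h1, sub_self]
    have hnn : ∀ ξ ∈ Finset.univ, 0 ≤ p ξ * (1 - Gξ ξ i j) := fun ξ _ =>
      mul_nonneg (hp ξ).le (by linarith [((hGξ ξ).1 i j).2])
    have := (Finset.sum_eq_zero_iff_of_nonneg hnn).mp hs ξ₀ (Finset.mem_univ _)
    rcases mul_eq_zero.mp this with h | h
    · exact absurd h (hp ξ₀).ne'
    · linarith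
  have h01 : Gξ ξ₀ 0 1 = 0 := hzero 0 1 (by norm_num [Matrix.vecHead, Matrix.vecTail])
  have h10 : Gξ ξ₀ 1 0 = 0 := hzero 1 0 (by norm_num [Matrix.vecHead, Matrix.vecTail])
  have h12 : Gξ ξ₀ 1 2 = 0 := hzero 1 2 (by norm_num [Matrix.vecHead, Matrix.vecTail]; rfl)
  have h21 : Gξ ξ₀ 2 1 = 0 := hzero 2 1 (by norm_num [Matrix.vecHead, Matrix.vecTail]; rfl)
  have h22 : Gξ ξ₀ 2 2 = 0 := hzero 2 2 (by norm_num [Matrix.vecHead, Matrix.vecTail]; rfl)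
  have h11 : Gξ ξ₀ 1 1 = 1 := hone 1 1 (by norm_num [Matrix.vecHead, Matrix.vecTail])
  have h02 : Gξ ξ₀ 0 2 = 1 := hone 0 2 (by norm_num [Matrix.vecHead, Matrix.vecTail]; rfl)
  -- row 2 of the eigenvector equation gives G 2 0 = q²
  have hrow2 := congrFun (hGξ ξ₀).2.2 2
  simp [Matrix.mulVec, dotProduct, Fin.sum_univ_three, h21, h22] at hrow2
  -- column 0 sum gives G 0 0
  have hcol0 := (hGξ ξ₀).2.1 0
  rw [Fin.sum_univ_three] at hcol0
  have h20 : Gξ ξ₀ 2 0 = q ^ 2 := hrow2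
  have h00 : Gξ ξ₀ 0 0 = 1 - q ^ 2 := by
    rw [h10, h20] at hcol0; linarith
  ext i j
  fin_cases i <;> fin_cases j <;>
    simp [Matrix.vecHead, Matrix.vecTail, h00, h01, h02, h10, h11, h12, h20, h21, h22]
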